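/- In the binary-IV setup, assume P(z = 1) > 0 and P(z = 0) > 0 and monotonicity. Then E[y | z = 1] − E[y | z = 0] = E[(g(1, u) − g(0, u))·1_C], where C is the complier event. -/

import Mathlib

open MeasureTheory ProbabilityTheory

/-- Conditional expectation of a real random variable given an event:
`E[Y | E] = E[Y·1_E]/P(E)`. -/
noncomputable def cexp {Ωs : Type*} [MeasurableSpace Ωs] (μ : Measure Ωs)
    (Y : Ωs → ℝ) (E : Set Ωs) : ℝ :=
  (∫ ω in E, Y ω ∂μ) / (μ E).toReal

/-- In the binary-IV setup with monotonicity (no defiers),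
`E[y | z = 1] − E[y | z = 0] = E[(g(1,u) − g(0,u))·1_C]` for the complier
event `C`. -/
theorem binary_iv_reduced_form_eq_complier_effect
    {Ωs V U : Type*} [MeasurableSpace Ωs] [MeasurableSpace V] [MeasurableSpace U]
    (μ : Measure Ωs) [IsProbabilityMeasure μ]
    (z : Ωs → Bool) (hzmeas : Measurable z)
    (v : Ωs → V) (hvmeas : Measurable v)
    (u : Ωs → U) (humeas : Measurable u)
    (f : Bool → V → Bool) (hfmeas : ∀ b, Measurable (f b))
    (g : Bool → U → ℝ) (hgmeas : ∀ b, Measurable (g b))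
    (hgint : ∀ b, Integrable (fun ω => g b (u ω)) μ)
    (hindep : IndepFun z (fun ω => (u ω, v ω)) μ)
    (hmono : ∀ w : V, f false w = true → f true w = true)
    (hz1 : 0 < μ {ω | z ω = true}) (hz0 : 0 < μ {ω | z ω = false})
    (y : Ωs → ℝ) (hy : y = fun ω => g (f (z ω) (v ω)) (u ω))
    (C : Set Ωs) (hC : C = {ω | f false (v ω) = false ∧ f true (v ω) = true}) :
    cexp μ y {ω | z ω = true} - cexp μ y {ω | z ω = false} =
      ∫ ω in C, (g true (u ω) - g false (u ω)) ∂μ := by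
  classical
  set Y : Bool → Ωs → ℝ := fun b ω => g (f b (v ω)) (u ω) with hYdef
  have hYite : ∀ b, Y b = fun ω =>
      if f b (v ω) = true then g true (u ω) else g false (u ω) := by
    intro b; funext ω; cases h : f b (v ω) <;> simp [Y, h]
  have hYmeas : ∀ b, Measurable (Y b) := by
    intro b
    rw [hYite b]
    exact Measurable.ite (((hfmeas b).comp hvmeas) (measurableSet_singleton true))
      ((hgmeas true).comp humeas) ((hgmeas false).comp humeas)
  have hYint : ∀ b, Integrable (Y b) μ := by
    intro b
    refine ((hgint true).abs.add (hgint false).abs).mono'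
      (hYmeas b).aestronglyMeasurable ?_
    filter_upwards with ω
    cases h : f b (v ω)
    · simp only [Y, h, Real.norm_eq_abs]
      exact le_add_of_nonneg_left (abs_nonneg _)
    · simp only [Y, h, Real.norm_eq_abs]
      exact le_add_of_nonneg_right (abs_nonneg _)
  have hset : ∀ c : Bool, MeasurableSet {ω | z ω = c} :=
    fun c => hzmeas (measurableSet_singleton c)
  -- independence key step
  have key : ∀ (b c : Bool), ∫ ω in {ω | z ω = c}, Y b ω ∂μ
      = (μ {ω | z ω = c}).toReal * ∫ ω, Y b ω ∂μ := by
    intro b c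
    have hφ : Measurable (fun d : Bool => if d = c then (1:ℝ) else 0) :=
      measurable_of_countable _
    have hψ : Measurable (fun p : U × V =>
        if f b p.2 = true then g true p.1 else g false p.1) :=
      Measurable.ite (((hfmeas b).comp measurable_snd) (measurableSet_singleton true))
        ((hgmeas true).comp measurable_fst) ((hgmeas false).comp measurable_fst)
    have hind : IndepFun (fun ω => if z ω = c then (1:ℝ) else 0)
        (fun ω => if f b (v ω) = true then g true (u ω) else g false (u ω)) μ :=
      hindep.comp hφ hψ
    have hXeq : (fun ω => if z ω = c then (1:ℝ) else 0)
        = Set.indicator {ω | z ω = c} (fun _ => (1:ℝ)) := by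
      funext ω
      by_cases h : z ω = c <;> simp [Set.indicator_apply, h]
    have hXint : Integrable (fun ω => if z ω = c then (1:ℝ) else 0) μ := by
      rw [hXeq]; exact (integrable_const (1:ℝ)).indicator (hset c)
    have hY' : Integrable (fun ω =>
        if f b (v ω) = true then g true (u ω) else g false (u ω)) μ := by
      rw [← hYite b]; exact hYint b
    have hmul := hind.integral_fun_mul_eq_mul_integral hXint.aestronglyMeasurable hY'.aestronglyMeasurable
    have hleft : ∫ ω, (if z ω = c then (1:ℝ) else 0)
        * (if f b (v ω) = true then g true (u ω) else g false (u ω)) ∂μ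
        = ∫ ω in {ω | z ω = c}, Y b ω ∂μ := by
      rw [← integral_indicator (hset c)]
      congr 1
      funext ω
      by_cases h : z ω = c
      · simp [Set.indicator_apply, h, hYite b]
      · simp [Set.indicator_apply, h]
    have hright : ∫ ω, (if z ω = c then (1:ℝ) else 0) ∂μ
        = (μ {ω | z ω = c}).toReal := by
      rw [hXeq, integral_indicator (hset c)]
      simp [Measure.real]
    calc ∫ ω in {ω | z ω = c}, Y b ω ∂μ
        = ∫ ω, (if z ω = c then (1:ℝ) else 0)
            * (if f b (v ω) = true then g true (u ω) else g false (u ω)) ∂μ :=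
          hleft.symm
      _ = (∫ ω, (if z ω = c then (1:ℝ) else 0) ∂μ)
            * ∫ ω, (if f b (v ω) = true then g true (u ω) else g false (u ω)) ∂μ :=
          hmul
      _ = (μ {ω | z ω = c}).toReal * ∫ ω, Y b ω ∂μ := by
          rw [hright, ← hYite b]
  -- y agrees with Y c on {z = c}
  have hy_on : ∀ c : Bool, ∫ ω in {ω | z ω = c}, y ω ∂μ
      = ∫ ω in {ω | z ω = c}, Y c ω ∂μ := by
    intro c
    apply setIntegral_congr_fun (hset c)
    intro ω hω
    have : z ω = c := hω
    rw [hy]; simp [Y, this]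
  have hcexp : ∀ c : Bool, 0 < μ {ω | z ω = c} →
      cexp μ y {ω | z ω = c} = ∫ ω, Y c ω ∂μ := by
    intro c hc
    have hne : (μ {ω | z ω = c}).toReal ≠ 0 :=
      (ENNReal.toReal_pos hc.ne' (measure_ne_top μ _)).ne'
    rw [cexp, hy_on c, key c c, mul_comm, mul_div_assoc, div_self hne, mul_one]
  rw [hcexp true hz1, hcexp false hz0, ← integral_sub (hYint true) (hYint false)]
  have hCmeas : MeasurableSet C := by
    rw [hC]
    exact (((hfmeas false).comp hvmeas) (measurableSet_singleton false)).inter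
      (((hfmeas true).comp hvmeas) (measurableSet_singleton true))
  rw [← integral_indicator hCmeas]
  congr 1
  funext ω
  rw [Set.indicator_apply]
  cases h0 : f false (v ω) <;> cases h1 : f true (v ω)
  · rw [if_neg (by rw [hC]; simp [h1])]
    simp [Y, h0, h1]
  · rw [if_pos (by rw [hC]; exact ⟨h0, h1⟩)]
    simp [Y, h0, h1]
  · exact absurd (hmono _ h0) (by simp [h1])
  · rw [if_neg (by rw [hC]; simp [h0])]
    simp [Y, h0, h1]
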